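/- Fix h ∈ ℝ. There exists δ > 0 such that for every solution (r(τ), φ(τ), ψ(τ), w(τ)) of the regularized logarithm equations on the energy level (1/2)e^{2w} = h r^2 − f(r) + 1: if at some time τ_0 we have 0 < r(τ_0) < δ and ṙ(τ_0) = 0, then r̈(τ_0) > 0. Specifically, ṙ = 0 with r > 0 forces cos φ = 0, and then r̈ = (r^3/(r^2+2))(e^{2w} − r^2) > 0 for r small. -/

import Mathlib

noncomputable def fExt (r : ℝ) : ℝ := if 0 < r then r ^ 2 * Real.log r else 0

/-- Wilson–Yorke hypothesis for `I = r`: for each `h` there is `δ > 0` such that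
along any solution of the regularized logarithm equations on the energy level
`(1/2)e^{2w} = h r² − f(r) + 1`, if `0 < r(τ₀) < δ` and `ṙ(τ₀) = 0` then
`cos φ(τ₀) = 0` and `r̈(τ₀) > 0`. -/
theorem wilson_yorke_hypothesis (h : ℝ) :
    ∃ δ : ℝ, 0 < δ ∧
    ∀ r φ ψ w : ℝ → ℝ,
      (∀ τ, HasDerivAt r
        (-((r τ) ^ 3 / ((r τ) ^ 2 + 2)) * Real.exp (2 * w τ) * Real.cos (φ τ)) τ) →
      (∀ τ, HasDerivAt φ ((Real.exp (2 * w τ) - (r τ) ^ 2) * Real.sin (φ τ)) τ) →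
      (∀ τ, HasDerivAt ψ ((r τ) ^ 2 * Real.sin (φ τ)) τ) →
      (∀ τ, HasDerivAt w
        ((r τ) ^ 2 * (1 - Real.exp (2 * w τ) / ((r τ) ^ 2 + 2)) * Real.cos (φ τ)) τ) →
      (∀ τ, (1 / 2) * Real.exp (2 * w τ) = h * (r τ) ^ 2 - fExt (r τ) + 1) →
      ∀ τ₀ : ℝ, 0 < r τ₀ → r τ₀ < δ → deriv r τ₀ = 0 →
        Real.cos (φ τ₀) = 0 ∧ 0 < deriv (deriv r) τ₀ := by
  refine ⟨min 1 (1 / (2 * |h| + 2)), by positivity, ?_⟩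
  intro r φ ψ w hr hφ hψ hw henergy τ₀ hrpos hrδ hderiv0
  set R := r τ₀ with hR
  have hR1 : R < 1 := lt_of_lt_of_le hrδ (min_le_left _ _)
  have hRh : R < 1 / (2 * |h| + 2) := lt_of_lt_of_le hrδ (min_le_right _ _)
  have hden : (0:ℝ) < R ^ 2 + 2 := by positivity
  have hEpos : (0:ℝ) < Real.exp (2 * w τ₀) := Real.exp_pos _
  -- cos φ τ₀ = 0
  have hcos : Real.cos (φ τ₀) = 0 := by
    have hd := (hr τ₀).deriv
    rw [hderiv0] at hd
    have hne : -((R) ^ 3 / (R ^ 2 + 2)) * Real.exp (2 * w τ₀) ≠ 0 := by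
      have : (0:ℝ) < R ^ 3 / (R ^ 2 + 2) := by positivity
      nlinarith
    rcases mul_eq_zero.mp hd.symm with h1 | h2
    · exact absurd h1 hne
    · exact h2
  -- energy bound: exp(2w) - R^2 > 0
  have hfExt : fExt R = R ^ 2 * Real.log R := if_pos hrpos
  have hE : Real.exp (2 * w τ₀) = 2 * (h * R ^ 2 - R ^ 2 * Real.log R + 1) := by
    have := henergy τ₀
    rw [hfExt] at this
    linarith
  have hlog : Real.log R ≤ 0 := Real.log_nonpos (le_of_lt hrpos) (le_of_lt hR1)
  have hEgt : R ^ 2 < Real.exp (2 * w τ₀) := by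
    rw [hE]
    have hhb : -|h| ≤ h := neg_abs_le h
    have hRpos' : (0:ℝ) < R := hrpos
    have h1 : R * (2 * |h| + 2) < 1 := by
      have : (0:ℝ) < 2 * |h| + 2 := by positivity
      calc R * (2 * |h| + 2) < (1 / (2 * |h| + 2)) * (2 * |h| + 2) := by
            exact mul_lt_mul_of_pos_right hRh this
        _ = 1 := by field_simp
    nlinarith [sq_nonneg R, mul_nonneg (sq_nonneg R) (neg_nonneg.mpr hlog)]
  -- derivatives vanish at τ₀
  have hR0 : HasDerivAt r 0 τ₀ := by
    have := hr τ₀; rwa [hcos, mul_zero] at this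
  have hW0 : HasDerivAt w 0 τ₀ := by
    have := hw τ₀; rwa [hcos, mul_zero] at this
  have hφ0 := hφ τ₀
  -- second derivative
  have hnum : HasDerivAt (fun t => (r t) ^ 3) (3 * R ^ 2 * 0) τ₀ := by
    simpa using hR0.fun_pow 3
  have hden' : HasDerivAt (fun t => (r t) ^ 2 + 2) (2 * R * 0) τ₀ := by
    simpa using (hR0.pow 2).add_const 2
  have hdiv : HasDerivAt (fun t => (r t) ^ 3 / ((r t) ^ 2 + 2))
      ((3 * R ^ 2 * 0 * (R ^ 2 + 2) - R ^ 3 * (2 * R * 0)) / (R ^ 2 + 2) ^ 2) τ₀ :=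
    hnum.div hden' (ne_of_gt hden)
  have hexp : HasDerivAt (fun t => Real.exp (2 * w t))
      (Real.exp (2 * w τ₀) * (2 * 0)) τ₀ := (hW0.const_mul 2).exp
  have hcosφ : HasDerivAt (fun t => Real.cos (φ t))
      (-Real.sin (φ τ₀) * ((Real.exp (2 * w τ₀) - R ^ 2) * Real.sin (φ τ₀))) τ₀ :=
    hφ0.cos
  have hF := ((hdiv.fun_neg.fun_mul hexp).fun_mul hcosφ)
  -- deriv r equals the vector field
  have hdr : deriv r = fun τ =>
      -((r τ) ^ 3 / ((r τ) ^ 2 + 2)) * Real.exp (2 * w τ) * Real.cos (φ τ) :=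
    funext fun τ => (hr τ).deriv
  have hsin : Real.sin (φ τ₀) ^ 2 = 1 := by
    have := Real.sin_sq_add_cos_sq (φ τ₀)
    rw [hcos] at this; nlinarith
  refine ⟨hcos, ?_⟩
  rw [hdr, hF.deriv]
  rw [hcos]
  have key : (-((3 * R ^ 2 * 0 * (R ^ 2 + 2) - R ^ 3 * (2 * R * 0)) / (R ^ 2 + 2) ^ 2) *
        Real.exp (2 * w τ₀) + -(R ^ 3 / (R ^ 2 + 2)) * (Real.exp (2 * w τ₀) * (2 * 0))) * 0 +
      -(R ^ 3 / (R ^ 2 + 2)) * Real.exp (2 * w τ₀) *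
        (-Real.sin (φ τ₀) * ((Real.exp (2 * w τ₀) - R ^ 2) * Real.sin (φ τ₀)))
      = R ^ 3 / (R ^ 2 + 2) * Real.exp (2 * w τ₀) * (Real.exp (2 * w τ₀) - R ^ 2) := by
    calc _ = R ^ 3 / (R ^ 2 + 2) * Real.exp (2 * w τ₀) * (Real.exp (2 * w τ₀) - R ^ 2) *
          Real.sin (φ τ₀) ^ 2 := by ring
      _ = _ := by rw [hsin]; ring
  rw [key]
  have hpos : (0:ℝ) < R ^ 3 / (R ^ 2 + 2) := by positivity
  exact mul_pos (mul_pos hpos hEpos) (sub_pos.mpr hEgt)
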